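/- Let λ_max ≥ λ₀ > λ > 0, let j ∈ {1,…,p} with Px̄^j ≠ 0, let ξ ∈ {+1, −1}, and set x̄ = −ξ·x̄^j. If ⟨Px̄, Px̄*⟩/(‖Px̄‖₂·‖Px̄*‖₂) = −1, then min_{θ ∈ A} ⟨θ, x̄⟩ = max{ sup_{u₁ > 0, u₂ ≥ 0} ḡ(u₁, u₂), −(‖Px̄‖₂/‖Px̄*‖₂)·mλ }, where ḡ(u₁, u₂) = −(1/(2u₁))·‖Px̄ + u₂·Px̄*‖₂² + u₂·m(λ₀ − λ) + ⟨θ₀, x̄⟩ − (1/2)·u₁·r². -/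

import Mathlib

section Aux

lemma pinsker_pt {x y : ℝ} (hy : 0 < y) (hyx : y ≤ x) (hx1 : x < 1) :
    2 * (x - y) ^ 2 ≤ y * Real.log y + (1 - y) * Real.log (1 - y)
      - (x * Real.log x + (1 - x) * Real.log (1 - x))
      + (x - y) * (Real.log x - Real.log (1 - x)) := by
  set f : ℝ → ℝ := fun z => y * Real.log y + (1 - y) * Real.log (1 - y)
      - (z * Real.log z + (1 - z) * Real.log (1 - z))
      + (z - y) * (Real.log z - Real.log (1 - z)) - 2 * (z - y) ^ 2 with hf
  have hd : ∀ z ∈ Set.Ioo (0:ℝ) 1, HasDerivAt f ((z - y) * (1/z + 1/(1-z) - 4)) z := by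
    intro z hz
    obtain ⟨hz0, hz1⟩ := hz
    have hz0' : z ≠ 0 := ne_of_gt hz0
    have hz1' : (1:ℝ) - z ≠ 0 := by intro h; nlinarith
    have h1 : HasDerivAt (fun z => z * Real.log z) (Real.log z + 1) z :=
      Real.hasDerivAt_mul_log hz0'
    have h2 : HasDerivAt (fun z : ℝ => (1 - z) * Real.log (1 - z))
        (-(Real.log (1 - z) + 1)) z := by
      have := (Real.hasDerivAt_mul_log hz1').comp z
        (((hasDerivAt_id z).const_sub 1))
      simpa [Function.comp_def] using this
    have h3 : HasDerivAt Real.log (1/z) z := by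
      simpa [one_div] using Real.hasDerivAt_log hz0'
    have h4 : HasDerivAt (fun z : ℝ => Real.log (1 - z)) (-(1/(1-z))) z := by
      have := (Real.hasDerivAt_log hz1').comp z (((hasDerivAt_id z).const_sub 1))
      simpa [one_div, Function.comp_def] using this
    have h5 : HasDerivAt (fun z : ℝ => (z - y) * (Real.log z - Real.log (1 - z)))
        ((Real.log z - Real.log (1 - z)) + (z - y) * (1/z + 1/(1-z))) z := by
      have := (((hasDerivAt_id z).sub_const y).mul (h3.sub h4))
      refine this.congr_deriv ?_
      simp only [id_eq, Pi.sub_apply]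
      try field_simp
      try ring
    have h6 : HasDerivAt (fun z : ℝ => 2 * (z - y)^2) (4 * (z - y)) z := by
      have := (((hasDerivAt_id z).sub_const y).pow 2).const_mul (2:ℝ)
      refine this.congr_deriv ?_
      simp only [id_eq]
      try push_cast
      try ring
    have := ((((h1.add h2).const_sub (y * Real.log y + (1 - y) * Real.log (1 - y))).add
      h5).sub h6)
    refine this.congr_deriv ?_
    ring
  have hmono : MonotoneOn f (Set.Icc y x) := by
    have hsub : Set.Icc y x ⊆ Set.Ioo 0 1 := fun z hz => ⟨lt_of_lt_of_le hy hz.1,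
      lt_of_le_of_lt hz.2 hx1⟩
    apply monotoneOn_of_deriv_nonneg (convex_Icc y x)
    · exact fun z hz => ((hd z (hsub hz)).continuousAt).continuousWithinAt
    · intro z hz
      rw [interior_Icc] at hz
      exact ((hd z (hsub (Set.Ioo_subset_Icc_self hz))).differentiableAt).differentiableWithinAt
    · intro z hz
      rw [interior_Icc] at hz
      rw [(hd z (hsub (Set.Ioo_subset_Icc_self hz))).deriv]
      have hz0 : 0 < z := lt_of_lt_of_le hy hz.1.le
      have hz1 : z < 1 := hz.2.trans hx1
      have : 0 ≤ 1/z + 1/(1-z) - 4 := by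
        rw [div_add_div _ _ (ne_of_gt hz0) (by linarith : (1:ℝ) - z ≠ 0)]
        rw [sub_nonneg, le_div_iff₀ (by nlinarith)]
        nlinarith [sq_nonneg (2*z-1)]
      have hzy : 0 ≤ z - y := by linarith [hz.1]
      positivity
  have key := hmono (Set.left_mem_Icc.mpr hyx) (Set.right_mem_Icc.mpr hyx) hyx
  have hfy : f y = 0 := by simp [hf]
  rw [hfy] at key
  simp only [hf] at key
  linarith

end Aux

/-- The dual objective `g(θ) = (1/m) Σ_i [θ_i log θ_i + (1−θ_i) log(1−θ_i)]`. -/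
noncomputable def g (m : ℕ) (θ : Fin m → ℝ) : ℝ :=
  (1 / (m : ℝ)) * ∑ i, (θ i * Real.log (θ i) + (1 - θ i) * Real.log (1 - θ i))

/-- The gradient of `g`, componentwise `(1/m) log(θ_i/(1−θ_i))`. -/
noncomputable def gradg (m : ℕ) (θ : Fin m → ℝ) : Fin m → ℝ :=
  fun i => (1 / (m : ℝ)) * Real.log (θ i / (1 - θ i))
/-- The dual feasible set `F_λ`: componentwise in `(0,1)`, `|⟨θ, x̄^j⟩| ≤ mλ` for all
columns `x̄^j = X j`, and `⟨θ, b⟩ = 0`. -/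
def Feas (m p : ℕ) (X : Fin p → Fin m → ℝ) (b : Fin m → ℝ) (lam : ℝ) :
    Set (Fin m → ℝ) :=
  {θ | (∀ i, 0 < θ i ∧ θ i < 1) ∧ (∀ j, |∑ i, θ i * X j i| ≤ (m : ℝ) * lam) ∧
    ∑ i, θ i * b i = 0}
open scoped Classical in
/-- `m⁺ = #{i : b_i = 1}`. -/
noncomputable def mPlus (m : ℕ) (b : Fin m → ℝ) : ℕ :=
  (Finset.univ.filter (fun i => b i = 1)).card

open scoped Classical in
/-- `m⁻ = #{i : b_i = −1}`. -/
noncomputable def mMinus (m : ℕ) (b : Fin m → ℝ) : ℕ :=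
  (Finset.univ.filter (fun i => b i = -1)).card

open scoped Classical in
/-- `θ_max`, with `(θ_max)_i = m⁻/m` if `b_i = 1` and `m⁺/m` if `b_i = −1`. -/
noncomputable def thetaMax (m : ℕ) (b : Fin m → ℝ) : Fin m → ℝ :=
  fun i => if b i = 1 then (mMinus m b : ℝ) / m else (mPlus m b : ℝ) / m

/-- `λ_max = (1/m) max_j |⟨θ_max, x̄^j⟩|`. -/
noncomputable def lamMax (m p : ℕ) (X : Fin p → Fin m → ℝ) (b : Fin m → ℝ) : ℝ :=
  (1 / (m : ℝ)) * ⨆ j : Fin p, |∑ i, thetaMax m b i * X j i|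
/-- `P`, the orthogonal projection onto the orthogonal complement of `b`:
`Pv = v − (⟨v,b⟩/‖b‖₂²) b`. -/
noncomputable def Pb (m : ℕ) (b : Fin m → ℝ) (v : Fin m → ℝ) : Fin m → ℝ :=
  fun i => v i - ((∑ k, v k * b k) / (∑ k, (b k) ^ 2)) * b i

set_option maxHeartbeats 1000000 in
/-- Lemma 7(b): if `⟨Px̄, Px̄*⟩/(‖Px̄‖₂‖Px̄*‖₂) = −1`, then
`min_{θ ∈ A} ⟨θ, x̄⟩ = max{ sup_{u₁ > 0, u₂ ≥ 0} ḡ(u₁, u₂), −(‖Px̄‖₂/‖Px̄*‖₂)mλ }`. -/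
theorem slores_dual_ubp_collinear
 (m p : ℕ) (hm : 1 ≤ m) (hp : 1 ≤ p)
    (X : Fin p → Fin m → ℝ) (b : Fin m → ℝ) (hb : ∀ i, b i = 1 ∨ b i = -1)
    (hmp : 1 ≤ mPlus m b) (hmm : 1 ≤ mMinus m b) (hlmax : 0 < lamMax m p X b)
    (lam lam₀ : ℝ) (hlam : 0 < lam) (hll : lam < lam₀) (hle : lam₀ ≤ lamMax m p X b)
    (θ₀ : Fin m → ℝ)
    (hθ₀ : θ₀ ∈ Feas m p X b lam₀ ∧ ∀ θ ∈ Feas m p X b lam₀, g m θ₀ ≤ g m θ)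
    (r : ℝ)
    (hr : r = Real.sqrt (((m : ℝ) / 2) * (g m (fun i => (lam / lam₀) * θ₀ i) - g m θ₀
      + (1 - lam / lam₀) * ∑ i, gradg m θ₀ i * θ₀ i)))
    (j₀ : Fin p) (hj₀ : |∑ i, θ₀ i * X j₀ i| = (m : ℝ) * lam₀)
    (xstar : Fin m → ℝ)
    (hxstar : xstar = fun i => Real.sign (∑ k, θ₀ k * X j₀ k) * X j₀ i)
    (A : Set (Fin m → ℝ))
    (hA : A = {θ | ∑ i, (θ i - θ₀ i) ^ 2 ≤ r ^ 2 ∧ ∑ i, θ i * b i = 0 ∧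
      ∑ i, θ i * xstar i ≤ (m : ℝ) * lam})
    (hPxs : Pb m b xstar ≠ 0)
    (j : Fin p) (hPj : Pb m b (X j) ≠ 0)
    (ξ : ℝ) (hξ : ξ = 1 ∨ ξ = -1)
    (xbar : Fin m → ℝ) (hxbar : xbar = fun i => -ξ * X j i)
    (gbar : ℝ → ℝ → ℝ)
    (hgbar : gbar = fun u₁ u₂ =>
      -(1 / (2 * u₁)) * ∑ i, (Pb m b xbar i + u₂ * Pb m b xstar i) ^ 2
        + u₂ * ((m : ℝ) * (lam₀ - lam)) + (∑ i, θ₀ i * xbar i) - (1 / 2) * u₁ * r ^ 2)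
    (hcos : (∑ i, Pb m b xbar i * Pb m b xstar i) /
        (Real.sqrt (∑ i, (Pb m b xbar i) ^ 2) * Real.sqrt (∑ i, (Pb m b xstar i) ^ 2)) = -1) :
    IsLeast ((fun θ => ∑ i, θ i * xbar i) '' A)
      (max (sSup {y : ℝ | ∃ u₁ u₂ : ℝ, 0 < u₁ ∧ 0 ≤ u₂ ∧ y = gbar u₁ u₂})
        (-(Real.sqrt (∑ i, (Pb m b xbar i) ^ 2) / Real.sqrt (∑ i, (Pb m b xstar i) ^ 2))
          * ((m : ℝ) * lam))) := by
  obtain ⟨⟨hpos, hcons, hob⟩, -⟩ := hθ₀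
  have hm0 : (0:ℝ) < m := by exact_mod_cast hm
  have hlam₀ : (0:ℝ) < lam₀ := hlam.trans hll
  set t : ℝ := lam / lam₀ with ht
  have ht0 : 0 < t := div_pos hlam hlam₀
  have ht1 : t < 1 := (div_lt_one hlam₀).mpr hll
  have htl : t * lam₀ = lam := div_mul_cancel₀ lam (ne_of_gt hlam₀)
  -- sums of squares of projections
  set Sb : ℝ := ∑ i, (Pb m b xbar i) ^ 2 with hSbdef
  set Ss : ℝ := ∑ i, (Pb m b xstar i) ^ 2 with hSsdef
  have hξ0 : ξ ≠ 0 := by rcases hξ with h | h <;> rw [h] <;> norm_num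
  have hPbxbar : ∀ i, Pb m b xbar i = -ξ * Pb m b (X j) i := by
    intro i
    simp only [Pb, hxbar]
    rw [show (∑ k, -ξ * X j k * b k) = -ξ * ∑ k, X j k * b k by
      rw [Finset.mul_sum]; exact Finset.sum_congr rfl fun k _ => by ring]
    ring
  have hSbpos : 0 < Sb := by
    obtain ⟨i₀, hi₀⟩ := Function.ne_iff.mp hPj
    refine Finset.sum_pos' (fun i _ => sq_nonneg _) ⟨i₀, Finset.mem_univ _, ?_⟩
    have : Pb m b xbar i₀ ≠ 0 := by
      rw [hPbxbar i₀]
      simp only [Pi.zero_apply] at hi₀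
      exact mul_ne_zero (by simpa using hξ0) hi₀
    positivity
  have hSspos : 0 < Ss := by
    obtain ⟨i₀, hi₀⟩ := Function.ne_iff.mp hPxs
    refine Finset.sum_pos' (fun i _ => sq_nonneg _) ⟨i₀, Finset.mem_univ _, ?_⟩
    simp only [Pi.zero_apply] at hi₀
    positivity
  set sb : ℝ := Real.sqrt Sb with hsbdef
  set ss : ℝ := Real.sqrt Ss with hssdef
  have hsb : 0 < sb := Real.sqrt_pos.mpr hSbpos
  have hss : 0 < ss := Real.sqrt_pos.mpr hSspos
  have hsb2 : sb ^ 2 = Sb := Real.sq_sqrt hSbpos.le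
  have hss2 : ss ^ 2 = Ss := Real.sq_sqrt hSspos.le
  -- collinearity
  have hinner : ∑ i, Pb m b xbar i * Pb m b xstar i = -(sb * ss) := by
    rw [div_eq_iff (ne_of_gt (mul_pos hsb hss))] at hcos
    linear_combination hcos
  have hquad : ∑ i, (ss * Pb m b xbar i + sb * Pb m b xstar i) ^ 2 = 0 := by
    have expand : ∑ i, (ss * Pb m b xbar i + sb * Pb m b xstar i) ^ 2
        = ss ^ 2 * Sb + 2 * ss * sb * (∑ i, Pb m b xbar i * Pb m b xstar i)
          + sb ^ 2 * Ss := by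
      rw [hSbdef, hSsdef, Finset.mul_sum, Finset.mul_sum, Finset.mul_sum,
        ← Finset.sum_add_distrib, ← Finset.sum_add_distrib]
      exact Finset.sum_congr rfl fun i _ => by ring
    rw [expand, hinner]
    linear_combination (-ss^2) * hsb2 + (-sb^2) * hss2
  have hkey : ∀ i, ss * Pb m b xbar i = -(sb * Pb m b xstar i) := by
    intro i
    have h0 := (Finset.sum_eq_zero_iff_of_nonneg
      (fun i _ => sq_nonneg (ss * Pb m b xbar i + sb * Pb m b xstar i))).mp hquad i
      (Finset.mem_univ i)
    have h1 := sq_eq_zero_iff.mp h0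
    linear_combination h1
  -- pairing lemmas
  have hpair : ∀ (z v : Fin m → ℝ), (∑ i, z i * b i) = 0 →
      ∑ i, z i * Pb m b v i = ∑ i, z i * v i := by
    intro z v hz
    have e : ∑ i, z i * Pb m b v i =
        (∑ i, z i * v i) - ((∑ k, v k * b k) / (∑ k, (b k) ^ 2)) * ∑ i, z i * b i := by
      rw [Finset.mul_sum, ← Finset.sum_sub_distrib]
      exact Finset.sum_congr rfl fun i _ => by simp only [Pb]; ring
    rw [e, hz, mul_zero, sub_zero]
  -- θ₀ against xstar
  have hS0 : ∑ i, θ₀ i * xstar i = (m : ℝ) * lam₀ := by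
    have hpull : ∑ i, θ₀ i * xstar i
        = Real.sign (∑ k, θ₀ k * X j₀ k) * ∑ i, θ₀ i * X j₀ i := by
      rw [hxstar, Finset.mul_sum]
      exact Finset.sum_congr rfl fun i _ => by ring
    have hSne : (∑ k, θ₀ k * X j₀ k) ≠ 0 := by
      intro h
      rw [h, abs_zero] at hj₀
      exact (mul_pos hm0 hlam₀).ne' hj₀.symm
    rcases lt_or_gt_of_ne hSne with h | h
    · rw [hpull, Real.sign_of_neg h, ← hj₀, abs_of_neg h]; ring
    · rw [hpull, Real.sign_of_pos h, ← hj₀, abs_of_pos h]; ring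
  -- master identity
  have hkey2 : ∀ θ : Fin m → ℝ, (∑ i, θ i * b i) = 0 →
      ss * ∑ i, θ i * xbar i = -(sb * ∑ i, θ i * xstar i) := by
    intro θ hθb
    calc ss * ∑ i, θ i * xbar i = ss * ∑ i, θ i * Pb m b xbar i := by
          rw [hpair θ xbar hθb]
      _ = ∑ i, θ i * (ss * Pb m b xbar i) := by
          rw [Finset.mul_sum]; exact Finset.sum_congr rfl fun i _ => by ring
      _ = ∑ i, -(sb * (θ i * Pb m b xstar i)) := by
          exact Finset.sum_congr rfl fun i _ => by rw [hkey i]; ring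
      _ = -(sb * ∑ i, θ i * Pb m b xstar i) := by
          rw [Finset.mul_sum, ← Finset.sum_neg_distrib]
      _ = -(sb * ∑ i, θ i * xstar i) := by rw [hpair θ xstar hθb]
  -- radius bound (Pinsker)
  have hterm : ∀ i : Fin m, 2 * (t * θ₀ i - θ₀ i) ^ 2 ≤
      (t * θ₀ i * Real.log (t * θ₀ i) + (1 - t * θ₀ i) * Real.log (1 - t * θ₀ i))
      - (θ₀ i * Real.log (θ₀ i) + (1 - θ₀ i) * Real.log (1 - θ₀ i))
      + (1 - t) * Real.log (θ₀ i / (1 - θ₀ i)) * θ₀ i := by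
    intro i
    obtain ⟨h0, h1⟩ := hpos i
    have hpk := pinsker_pt (x := θ₀ i) (y := t * θ₀ i) (by positivity)
      (mul_le_of_le_one_left h0.le ht1.le) h1
    rw [Real.log_div (ne_of_gt h0) (by linarith : (1 : ℝ) - θ₀ i ≠ 0)]
    have e1 : (2:ℝ) * (t * θ₀ i - θ₀ i) ^ 2 = 2 * (θ₀ i - t * θ₀ i) ^ 2 := by ring
    have e2 : (1 - t) * (Real.log (θ₀ i) - Real.log (1 - θ₀ i)) * θ₀ i
        = (θ₀ i - t * θ₀ i) * (Real.log (θ₀ i) - Real.log (1 - θ₀ i)) := by ring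
    linarith only [hpk, e1, e2]
  have hE : ∑ i, (t * θ₀ i - θ₀ i) ^ 2 ≤ ((m : ℝ) / 2) * (g m (fun i => t * θ₀ i) - g m θ₀
      + (1 - t) * ∑ i, gradg m θ₀ i * θ₀ i) := by
    have hsum := Finset.sum_le_sum (fun i (_ : i ∈ (Finset.univ : Finset (Fin m))) => hterm i)
    rw [← Finset.mul_sum] at hsum
    have hsplit : ∑ i, ((t * θ₀ i * Real.log (t * θ₀ i)
          + (1 - t * θ₀ i) * Real.log (1 - t * θ₀ i))
        - (θ₀ i * Real.log (θ₀ i) + (1 - θ₀ i) * Real.log (1 - θ₀ i))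
        + (1 - t) * Real.log (θ₀ i / (1 - θ₀ i)) * θ₀ i)
        = (∑ i, (t * θ₀ i * Real.log (t * θ₀ i)
            + (1 - t * θ₀ i) * Real.log (1 - t * θ₀ i)))
        - (∑ i, (θ₀ i * Real.log (θ₀ i) + (1 - θ₀ i) * Real.log (1 - θ₀ i)))
        + (1 - t) * ∑ i, Real.log (θ₀ i / (1 - θ₀ i)) * θ₀ i := by
      rw [Finset.sum_add_distrib, Finset.sum_sub_distrib, Finset.mul_sum]
      congr 1
      exact Finset.sum_congr rfl fun i _ => by ring
    rw [hsplit] at hsum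
    have hgrad : ∑ i, gradg m θ₀ i * θ₀ i
        = (1 / (m : ℝ)) * ∑ i, Real.log (θ₀ i / (1 - θ₀ i)) * θ₀ i := by
      rw [Finset.mul_sum]
      exact Finset.sum_congr rfl fun i _ => by simp only [gradg]; ring
    simp only [g, hgrad]
    set SA := ∑ i, (t * θ₀ i * Real.log (t * θ₀ i)
      + (1 - t * θ₀ i) * Real.log (1 - t * θ₀ i)) with hSA
    set SB := ∑ i, (θ₀ i * Real.log (θ₀ i) + (1 - θ₀ i) * Real.log (1 - θ₀ i)) with hSB
    set SC := ∑ i, Real.log (θ₀ i / (1 - θ₀ i)) * θ₀ i with hSC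
    have hmne : (m : ℝ) ≠ 0 := ne_of_gt hm0
    have heq : ((m : ℝ) / 2) * ((1 / (m : ℝ)) * SA - (1 / (m : ℝ)) * SB
        + (1 - t) * ((1 / (m : ℝ)) * SC)) = (1 / 2) * (SA - SB + (1 - t) * SC) := by
      field_simp
    rw [heq]
    linarith only [hsum]
  have hsq0 : (0 : ℝ) ≤ ∑ i, (t * θ₀ i - θ₀ i) ^ 2 :=
    Finset.sum_nonneg fun i _ => sq_nonneg _
  have hr2 : r ^ 2 = ((m : ℝ) / 2) * (g m (fun i => t * θ₀ i) - g m θ₀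
      + (1 - t) * ∑ i, gradg m θ₀ i * θ₀ i) := by
    rw [hr]; exact Real.sq_sqrt (le_trans hsq0 hE)
  have hball : ∑ i, (t * θ₀ i - θ₀ i) ^ 2 ≤ r ^ 2 := by rw [hr2]; exact hE
  have hr0 : 0 ≤ r := by rw [hr]; exact Real.sqrt_nonneg _
  -- δ ≤ r * ss
  have hzb : ∑ i, (θ₀ i - t * θ₀ i) * b i = 0 := by
    have e : ∑ i, (θ₀ i - t * θ₀ i) * b i = (1 - t) * ∑ i, θ₀ i * b i := by
      rw [Finset.mul_sum]; exact Finset.sum_congr rfl fun i _ => by ring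
    rw [e, hob, mul_zero]
  have hzstar : ∑ i, (θ₀ i - t * θ₀ i) * xstar i = (m : ℝ) * (lam₀ - lam) := by
    have e : ∑ i, (θ₀ i - t * θ₀ i) * xstar i = (1 - t) * ∑ i, θ₀ i * xstar i := by
      rw [Finset.mul_sum]; exact Finset.sum_congr rfl fun i _ => by ring
    rw [e, hS0]
    linear_combination (-(m : ℝ)) * htl
  have hdelta : (m : ℝ) * (lam₀ - lam) ≤ r * ss := by
    have hCS := Finset.sum_mul_sq_le_sq_mul_sq Finset.univ
      (fun i => θ₀ i - t * θ₀ i) (fun i => Pb m b xstar i)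
    have hz2 : ∑ i, (θ₀ i - t * θ₀ i) ^ 2 ≤ r ^ 2 := by
      have e : ∀ i : Fin m, (θ₀ i - t * θ₀ i) ^ 2 = (t * θ₀ i - θ₀ i) ^ 2 := fun i => by ring
      rw [Finset.sum_congr rfl fun i _ => e i]; exact hball
    have hps : ∑ i, (θ₀ i - t * θ₀ i) * Pb m b xstar i = (m : ℝ) * (lam₀ - lam) := by
      rw [hpair _ xstar hzb, hzstar]
    have h2 : ((m : ℝ) * (lam₀ - lam)) ^ 2 ≤ r ^ 2 * Ss := by
      calc ((m : ℝ) * (lam₀ - lam)) ^ 2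
          = (∑ i, (θ₀ i - t * θ₀ i) * Pb m b xstar i) ^ 2 := by rw [hps]
        _ ≤ (∑ i, (θ₀ i - t * θ₀ i) ^ 2) * Ss := by rw [hSsdef]; exact hCS
        _ ≤ r ^ 2 * Ss := mul_le_mul_of_nonneg_right hz2 hSspos.le
    have h3 : ((m : ℝ) * (lam₀ - lam)) ^ 2 ≤ (r * ss) ^ 2 := by
      rw [show (r * ss) ^ 2 = r ^ 2 * Ss by rw [mul_pow, hss2]]; exact h2
    exact le_of_pow_le_pow_left₀ two_ne_zero (mul_nonneg hr0 hss.le) h3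
  -- witness
  set θs : Fin m → ℝ := fun i => t * θ₀ i with hθs
  have hθsb : ∑ i, θs i * b i = 0 := by
    have e : ∑ i, θs i * b i = t * ∑ i, θ₀ i * b i := by
      rw [Finset.mul_sum]; exact Finset.sum_congr rfl fun i _ => by rw [hθs]; ring
    rw [e, hob, mul_zero]
  have hθsstar : ∑ i, θs i * xstar i = (m : ℝ) * lam := by
    have e : ∑ i, θs i * xstar i = t * ∑ i, θ₀ i * xstar i := by
      rw [Finset.mul_sum]; exact Finset.sum_congr rfl fun i _ => by rw [hθs]; ring
    rw [e, hS0]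
    linear_combination (m : ℝ) * htl
  have hθsA : θs ∈ A := by
    rw [hA]
    refine ⟨?_, hθsb, le_of_eq hθsstar⟩
    exact hball
  set V : ℝ := -(sb / ss) * ((m : ℝ) * lam) with hV
  have hss' : ss ≠ 0 := ne_of_gt hss
  have hssV : ss * V = -(sb * ((m : ℝ) * lam)) := by
    rw [hV]; field_simp
    try ring
  have hθsval : ∑ i, θs i * xbar i = V := by
    have h1 : ss * ∑ i, θs i * xbar i = ss * V := by
      rw [hkey2 θs hθsb, hθsstar, hssV]
    exact mul_left_cancel₀ hss' h1
  -- lower bound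
  have hlb : ∀ θ ∈ A, V ≤ ∑ i, θ i * xbar i := by
    intro θ hθA
    rw [hA] at hθA
    obtain ⟨-, hθb, hθstar⟩ := hθA
    have h1 : ss * ∑ i, θ i * xbar i = -(sb * ∑ i, θ i * xstar i) := hkey2 θ hθb
    have h2 : ss * V ≤ ss * ∑ i, θ i * xbar i := by
      rw [h1, hssV]
      have h3 := mul_le_mul_of_nonneg_left hθstar hsb.le
      linarith only [h3]
    exact le_of_mul_le_mul_left h2 hss
  -- θ₀ value
  have hX0 : ss * ∑ i, θ₀ i * xbar i = -(sb * ((m : ℝ) * lam₀)) := by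
    rw [hkey2 θ₀ hob, hS0]
  -- sup bound
  have hsupb : ∀ y ∈ {y : ℝ | ∃ u₁ u₂ : ℝ, 0 < u₁ ∧ 0 ≤ u₂ ∧ y = gbar u₁ u₂}, y ≤ V := by
    rintro y ⟨u₁, u₂, hu₁, hu₂, rfl⟩
    simp only [hgbar]
    have hQ : ss ^ 2 * ∑ i, (Pb m b xbar i + u₂ * Pb m b xstar i) ^ 2
        = (u₂ * ss - sb) ^ 2 * Ss := by
      rw [hSsdef, Finset.mul_sum, Finset.mul_sum]
      refine Finset.sum_congr rfl fun i _ => ?_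
      have hk := hkey i
      linear_combination (ss * (Pb m b xbar i + u₂ * Pb m b xstar i)
        + (u₂ * ss - sb) * Pb m b xstar i) * hk
    have hQ2 : ∑ i, (Pb m b xbar i + u₂ * Pb m b xstar i) ^ 2 = (u₂ * ss - sb) ^ 2 := by
      rw [← hss2] at hQ
      exact mul_left_cancel₀ (pow_ne_zero 2 hss') (by linear_combination hQ)
    have h2u : (0 : ℝ) < 2 * u₁ := by linarith only [hu₁]
    have hamgm : |u₂ * ss - sb| * r ≤ (u₂ * ss - sb) ^ 2 / (2 * u₁) + u₁ * r ^ 2 / 2 := by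
      have h : 2 * u₁ * (|u₂ * ss - sb| * r) ≤ (u₂ * ss - sb) ^ 2 + u₁ ^ 2 * r ^ 2 := by
        linarith only [sq_nonneg (|u₂ * ss - sb| - u₁ * r), sq_abs (u₂ * ss - sb)]
      have e : (u₂ * ss - sb) ^ 2 / (2 * u₁) + u₁ * r ^ 2 / 2
          = ((u₂ * ss - sb) ^ 2 + u₁ ^ 2 * r ^ 2) / (2 * u₁) := by
        field_simp
      rw [e, le_div_iff₀ h2u]
      linarith
    have hw : (u₂ * ss - sb) * ((m : ℝ) * (lam₀ - lam))
        ≤ |u₂ * ss - sb| * (r * ss) := by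
      calc (u₂ * ss - sb) * ((m : ℝ) * (lam₀ - lam))
          ≤ |u₂ * ss - sb| * ((m : ℝ) * (lam₀ - lam)) := by
            exact mul_le_mul_of_nonneg_right (le_abs_self _)
              (mul_nonneg hm0.le (by linarith only [hll]))
        _ ≤ |u₂ * ss - sb| * (r * ss) :=
            mul_le_mul_of_nonneg_left hdelta (abs_nonneg _)
    have hamgm' : |u₂ * ss - sb| * r * ss
        ≤ ((u₂ * ss - sb) ^ 2 / (2 * u₁) + u₁ * r ^ 2 / 2) * ss := by
      calc |u₂ * ss - sb| * r * ss = (|u₂ * ss - sb| * r) * ss := by ring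
        _ ≤ ((u₂ * ss - sb) ^ 2 / (2 * u₁) + u₁ * r ^ 2 / 2) * ss :=
            mul_le_mul_of_nonneg_right hamgm hss.le
    have hchain : (u₂ * ss - sb) * ((m : ℝ) * (lam₀ - lam))
        ≤ ((u₂ * ss - sb) ^ 2 / (2 * u₁) + u₁ * r ^ 2 / 2) * ss :=
      le_trans hw (by linarith only [hamgm'])
    rw [hQ2]
    refine le_of_mul_le_mul_left ?_ hss
    have hid : ss * (-(1 / (2 * u₁)) * (u₂ * ss - sb) ^ 2
          + u₂ * ((m : ℝ) * (lam₀ - lam)) + (∑ i, θ₀ i * xbar i) - 1 / 2 * u₁ * r ^ 2)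
        = ss * (∑ i, θ₀ i * xbar i) + sb * ((m : ℝ) * (lam₀ - lam))
          + ((u₂ * ss - sb) * ((m : ℝ) * (lam₀ - lam))
            - ((u₂ * ss - sb) ^ 2 / (2 * u₁) + u₁ * r ^ 2 / 2) * ss) := by
      field_simp
      ring
    rw [hid, hX0, hssV]
    have h0 : (u₂ * ss - sb) * ((m : ℝ) * (lam₀ - lam))
        - ((u₂ * ss - sb) ^ 2 / (2 * u₁) + u₁ * r ^ 2 / 2) * ss ≤ 0 :=
      sub_nonpos.mpr hchain
    linarith only [h0]
  have hne : Set.Nonempty {y : ℝ | ∃ u₁ u₂ : ℝ, 0 < u₁ ∧ 0 ≤ u₂ ∧ y = gbar u₁ u₂} :=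
    ⟨gbar 1 0, 1, 0, one_pos, le_refl 0, rfl⟩
  have hsup_le : sSup {y : ℝ | ∃ u₁ u₂ : ℝ, 0 < u₁ ∧ 0 ≤ u₂ ∧ y = gbar u₁ u₂} ≤ V :=
    csSup_le hne hsupb
  rw [max_eq_right hsup_le]
  constructor
  · exact ⟨θs, hθsA, hθsval⟩
  · rintro y ⟨θ, hθA, rfl⟩
    exact hlb θ hθA
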